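/- Let A be an Artin algebra and C ⊆ mod A an additive subcategory closed under submodules. An A-module Y is a filtered colimit of modules in C if and only if every finitely presented (equivalently, finitely generated) submodule of Y belongs to C. -/

import Mathlib

universe u

open CategoryTheory

variable (A : Type u) [Ring A]

/-- `C` is a full additive subcategory of `mod A` closed under submodules: a class of
finitely generated modules containing the zero modules, closed under (finitely generated)
submodules (hence under isomorphism) and finite direct sums. -/
def IsSubmoduleClosedSubcat (C : Set (ModuleCat.{u} A)) : Prop :=
  (∀ M ∈ C, Module.Finite A M) ∧
  (∀ M : ModuleCat.{u} A, Module.Finite A M → Subsingleton M → M ∈ C) ∧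
  (∀ M N : ModuleCat.{u} A, N ∈ C → Module.Finite A M →
    (∃ f : M →ₗ[A] N, Function.Injective f) → M ∈ C) ∧
  (∀ M N : ModuleCat.{u} A, M ∈ C → N ∈ C → ModuleCat.of A (↑M × ↑N) ∈ C)

/-- A presentation of the module `Y` as a filtered colimit of modules in the class `C`. -/
structure FilteredColimitPresentation (C : Set (ModuleCat.{u} A)) (Y : ModuleCat.{u} A) where
  /-- the filtered index category -/
  J : Type u
  [instCat : SmallCategory J]
  [instFiltered : IsFiltered J]
  /-- the diagram, with values in `C` -/
  F : J ⥤ ModuleCat.{u} A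
  mem : ∀ j : J, F.obj j ∈ C
  /-- a colimit cocone over the diagram -/
  cocone : Limits.Cocone F
  isColimit : Limits.IsColimit cocone
  /-- whose vertex is the module `Y` -/
  iso : cocone.pt ≅ Y

/-- Let `A` be an Artin algebra and `C ⊆ mod A` an additive subcategory closed under
submodules.  A module `Y` is a filtered colimit of modules in `C` iff every finitely
generated submodule of `Y` belongs to `C`. -/

private lemma isNoetherian_of_surj' {R S M : Type*} [Ring R] [Ring S] [AddCommGroup M]
    [Module R M] [Module S M] (f : R →+* S) (hf : Function.Surjective f)
    (hsmul : ∀ (r : R) (m : M), f r • m = r • m) (hN : IsNoetherian S M) :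
    IsNoetherian R M := by
  rw [isNoetherian_iff] at hN ⊢
  let g : Submodule R M → Submodule S M := fun p =>
    { carrier := p
      add_mem' := fun ha hb => p.add_mem ha hb
      zero_mem' := p.zero_mem
      smul_mem' := fun s m hm => by
        obtain ⟨r, rfl⟩ := hf s
        rw [hsmul]; exact p.smul_mem r hm }
  have hg : ∀ p q : Submodule R M, p < q → g p < g q := by
    intro p q h
    rw [← SetLike.coe_ssubset_coe] at h ⊢
    exact h
  exact Subrelation.wf (fun {p q} h => hg q p h) (InvImage.wf g hN)

private lemma isNoetherianRing_of_isArtinianRing' (R : Type*) [CommRing R] [IsArtinianRing R] :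
    IsNoetherianRing R := by
  classical
  set J : Ideal R := (⊥ : Ideal R).jacobson with hJdef
  obtain ⟨n, hn⟩ := IsArtinianRing.isNilpotent_jacobson_bot (R := R)
  have hJrad : J = nilradical R := by
    rw [nilradical_eq_sInf, hJdef, Ideal.jacobson]
    congr 1
    ext I
    simp [IsArtinianRing.isPrime_iff_isMaximal]
  haveI hred : IsReduced (R ⧸ J) := (Ideal.isRadical_iff_quotient_reduced J).mp
    (by rw [hJrad]; exact Ideal.radical_isRadical ⊥)
  haveI : IsSemisimpleRing (R ⧸ J) := IsArtinianRing.isSemisimpleRing_of_isReduced (R := R ⧸ J)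
  have key : ∀ k : ℕ, IsNoetherian R (R ⧸ (J ^ k : Ideal R)) := by
    intro k
    induction k with
    | zero =>
      haveI : Subsingleton (R ⧸ (J ^ 0 : Ideal R)) := by
        rw [pow_zero, Ideal.one_eq_top]
        infer_instance
      infer_instance
    | succ k ih =>
      set I1 : Ideal R := J ^ (k + 1) with hI1
      have hle : I1 ≤ J ^ k := Ideal.pow_le_pow_right (Nat.le_succ k)
      set N : Submodule R (R ⧸ I1) := Submodule.map I1.mkQ (J ^ k) with hNdef
      haveI := ih
      have hQ : IsNoetherian R ((R ⧸ I1) ⧸ N) :=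
        isNoetherian_of_linearEquiv (Submodule.quotientQuotientEquivQuotient I1 (J ^ k) hle).symm
      have htor : Module.IsTorsionBySet R N (J : Set R) := by
        rintro ⟨x, hx⟩ ⟨j, hj⟩
        obtain ⟨y, hy, rfl⟩ := hx
        apply Subtype.ext
        show j • (I1.mkQ y) = 0
        rw [← map_smul, Submodule.mkQ_apply, Submodule.Quotient.mk_eq_zero]
        show j • y ∈ I1
        rw [hI1, pow_succ']
        exact Ideal.mul_mem_mul hj hy
      letI : Module (R ⧸ J) N := htor.module
      haveI : IsScalarTower R (R ⧸ J) N := htor.isScalarTower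
      haveI : IsArtinian R (R ⧸ I1) := inferInstance
      haveI : IsArtinian R N := inferInstance
      haveI : IsArtinian (R ⧸ J) N := isArtinian_of_tower R inferInstance
      haveI : IsSemisimpleModule (R ⧸ J) N := inferInstance
      have hNoethS : IsNoetherian (R ⧸ J) N :=
        (IsSemisimpleModule.finite_tfae.out 1 2).mpr ‹_›
      have hNoethN : IsNoetherian R N :=
        isNoetherian_of_surj' (Ideal.Quotient.mk J) Ideal.Quotient.mk_surjective
          (fun r m => htor.mk_smul r m) hNoethS
      exact (isNoetherian_iff_submodule_quotient N).mpr ⟨hNoethN, hQ⟩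
  have h := key n
  rw [hn] at h
  haveI := h
  exact isNoetherian_of_linearEquiv (Submodule.quotEquivOfEqBot (0 : Ideal R) (by simp))

private lemma fwd {A : Type u} [Ring A] [IsNoetherianRing A]
    (C : Set (ModuleCat.{u} A)) (hC : IsSubmoduleClosedSubcat A C)
    (Y : ModuleCat.{u} A) (P : FilteredColimitPresentation A C Y)
    (N : Submodule A Y) (hN : Module.Finite A N) : ModuleCat.of A N ∈ C := by
  classical
  obtain ⟨hfin, hzero, hsub, hprod⟩ := hC
  letI := P.instCat
  haveI := P.instFiltered
  -- colimit cocone with vertex `Y`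
  let D : Limits.Cocone P.F :=
    { pt := Y
      ι := { app := fun j => P.cocone.ι.app j ≫ P.iso.hom
             naturality := fun i j f => by
               rw [← Category.assoc, P.cocone.ι.naturality f]
               simp } }
  have hD : Limits.IsColimit D :=
    P.isColimit.ofIsoColimit (Limits.Cocones.ext P.iso (fun j => rfl))
  -- ranges
  let r : P.J → Submodule A Y := fun j => LinearMap.range (D.ι.app j).hom
  have hmono : ∀ {i j : P.J} (f : i ⟶ j), r i ≤ r j := by
    rintro i j f y ⟨x, rfl⟩
    exact ⟨P.F.map f x, congrArg (fun φ => φ.hom x) (D.w f)⟩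
  have hle : N ≤ ⨆ j, r j := by
    intro y _
    obtain ⟨j, x, hx⟩ := Limits.Concrete.isColimit_exists_rep P.F hD y
    exact Submodule.mem_iSup_of_mem j ⟨x, hx⟩
  have hNfg : N.FG := Module.Finite.iff_fg.mp hN
  obtain ⟨t, ht⟩ := CompleteLattice.IsCompactElement.exists_finset_of_le_iSup (Submodule A Y) ((Submodule.fg_iff_compact N).mp hNfg) r hle
  obtain ⟨S, hS⟩ := IsFiltered.sup_objs_exists t
  have hNle : N ≤ r S := ht.trans (iSup₂_le fun j hj => (hS hj).elim fun f => hmono f)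
  -- preimage
  let g : (P.F.obj S : Type u) →ₗ[A] Y := (D.ι.app S).hom
  let M : Submodule A (P.F.obj S) := N.comap g
  let p : M →ₗ[A] N := g.restrict (fun x hx => hx)
  have hp : Function.Surjective p := by
    rintro ⟨n, hn⟩
    obtain ⟨x, hx⟩ := hNle hn
    exact ⟨⟨x, show g x ∈ N by rw [hx]; exact hn⟩, Subtype.ext hx⟩
  -- kernel dies at a finite stage
  haveI : Module.Finite A (P.F.obj S) := hfin _ (P.mem S)
  have hker : (LinearMap.ker g).FG := IsNoetherian.noetherian _
  obtain ⟨s, hs⟩ := hker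
  have main : ∀ s' : Finset (P.F.obj S), (↑s' : Set (P.F.obj S)) ⊆ (LinearMap.ker g : Set _) →
      ∃ (k : P.J) (τ : S ⟶ k), ∀ x ∈ s', P.F.map τ x = 0 := by
    intro s'
    induction s' using Finset.induction_on with
    | empty => exact fun _ => ⟨S, 𝟙 S, fun x hx => absurd hx (Finset.notMem_empty x)⟩
    | @insert a s'' ha ih =>
      intro hsub
      obtain ⟨k', τ', hτ'⟩ := ih (fun x hx => hsub (Finset.mem_insert_of_mem hx))
      have ha0 : D.ι.app S a = D.ι.app S (0 : P.F.obj S) := by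
        have h1 : g a = 0 := hsub (Finset.mem_insert_self a s'')
        rw [show D.ι.app S a = g a from rfl, h1, map_zero]
      obtain ⟨k₀, f, g₀, hfg⟩ := Limits.Concrete.isColimit_exists_of_rep_eq P.F hD a 0 ha0
      have hfa : P.F.map f a = 0 := hfg.trans (map_zero _)
      let u := IsFiltered.leftToMax k' k₀
      let v := IsFiltered.rightToMax k' k₀
      let cq := IsFiltered.coeqHom (τ' ≫ u) (f ≫ v)
      refine ⟨IsFiltered.coeq (τ' ≫ u) (f ≫ v), τ' ≫ u ≫ cq, fun x hx => ?_⟩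
      rcases Finset.mem_insert.mp hx with rfl | hx'
      · calc P.F.map (τ' ≫ u ≫ cq) x
            = P.F.map ((τ' ≫ u) ≫ cq) x := by rw [Category.assoc]
          _ = P.F.map ((f ≫ v) ≫ cq) x := by
              rw [IsFiltered.coeq_condition (τ' ≫ u) (f ≫ v)]
          _ = P.F.map (v ≫ cq) (P.F.map f x) := by simp only [P.F.map_comp]; rfl
          _ = 0 := by rw [hfa, map_zero]
      · calc P.F.map (τ' ≫ u ≫ cq) x
            = P.F.map (u ≫ cq) (P.F.map τ' x) := by simp only [P.F.map_comp]; rfl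
          _ = 0 := by rw [hτ' x hx', map_zero]
  obtain ⟨k, τ, hτ⟩ := main s (by rw [← hs]; exact fun x hx => Submodule.subset_span hx)
  have hkerτ : ∀ x ∈ LinearMap.ker g, P.F.map τ x = 0 := by
    intro x hx
    rw [← hs] at hx
    exact LinearMap.mem_ker.mp (Submodule.span_le.mpr
      (fun z hz => LinearMap.mem_ker.mpr (hτ z hz)) hx)
  let q : M →ₗ[A] (P.F.obj k : Type u) := (P.F.map τ).hom.comp M.subtype
  have hkq : LinearMap.ker q = LinearMap.ker p := by
    ext x
    constructor
    · intro hq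
      have hgx : g x.1 = 0 := by
        have hw := congrArg (fun φ => φ.hom x.1) (D.w τ)
        have h0 : (P.F.map τ ≫ D.ι.app k) x.1 = 0 := by
          show D.ι.app k (P.F.map τ x.1) = 0
          rw [show P.F.map τ x.1 = 0 from hq, map_zero]
        exact hw.symm.trans h0
      exact LinearMap.mem_ker.mpr (Subtype.ext hgx)
    · intro hp0
      have hgx : g x.1 = 0 := congrArg Subtype.val (LinearMap.mem_ker.mp hp0)
      exact LinearMap.mem_ker.mpr (hkerτ x.1 hgx)
  -- assemble injection N ↪ F.obj k
  have hinj : ∃ φ : (N : Type u) →ₗ[A] (P.F.obj k : Type u), Function.Injective φ := by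
    let e := (p.quotKerEquivOfSurjective hp).symm
    let lift := (LinearMap.ker p).liftQ q (le_of_eq hkq.symm)
    have h1 : Function.Injective lift := by
      rw [← LinearMap.ker_eq_bot]
      exact Submodule.ker_liftQ_eq_bot _ _ _ (le_of_eq hkq)
    refine ⟨lift.comp e.toLinearMap, fun a b hab => e.injective (h1 ?_)⟩
    exact hab
  exact hsub (ModuleCat.of A N) (P.F.obj k) (P.mem k) hN hinj

noncomputable def backPres {A : Type u} [Ring A] (C : Set (ModuleCat.{u} A))
    (Y : ModuleCat.{u} A)
    (h : ∀ N : Submodule A Y, Module.Finite A N → ModuleCat.of A N ∈ C) :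
    FilteredColimitPresentation A C Y := by
  letI J := { N : Submodule A Y // N.FG }
  haveI : Nonempty J := ⟨⟨⊥, Submodule.fg_bot⟩⟩
  haveI : IsDirected J (· ≤ ·) :=
    ⟨fun N M => ⟨⟨N.1 ⊔ M.1, N.2.sup M.2⟩, Subtype.coe_le_coe.mp le_sup_left, Subtype.coe_le_coe.mp le_sup_right⟩⟩
  let F : J ⥤ ModuleCat.{u} A :=
    { obj := fun N => ModuleCat.of A N.1
      map := fun {N M} f => ModuleCat.ofHom (Submodule.inclusion (Subtype.coe_le_coe.mpr (leOfHom f)))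
      map_id := fun N => rfl
      map_comp := fun f g => rfl }
  let c : Limits.Cocone F :=
    { pt := Y
      ι := { app := fun N => ModuleCat.ofHom N.1.subtype
             naturality := fun N M f => rfl } }
  refine { J := J, F := F, mem := fun N => h N.1 (Module.Finite.iff_fg.mpr N.2),
           cocone := c, iso := Iso.refl Y, isColimit := ?_ }
  have hσfg : ∀ y : Y, (Submodule.span A ({y} : Set Y)).FG := fun y =>
    Submodule.fg_span_singleton y
  let σ : Y → J := fun y => ⟨Submodule.span A {y}, hσfg y⟩
  have hmem : ∀ y : Y, y ∈ (σ y).1 := fun y => Submodule.mem_span_singleton_self y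
  have key : ∀ (s : Limits.Cocone F) (N : J) (y : Y) (hy : y ∈ N.1),
      (s.ι.app N ⟨y, hy⟩ : s.pt) = s.ι.app (σ y) ⟨y, hmem y⟩ := by
    intro s N y hy
    have hle : σ y ≤ N := Subtype.coe_le_coe.mp
      (Submodule.span_le.mpr (Set.singleton_subset_iff.mpr hy))
    calc (s.ι.app N ⟨y, hy⟩ : s.pt)
        = (F.map (homOfLE hle) ≫ s.ι.app N) ⟨y, hmem y⟩ := rfl
      _ = (s.ι.app (σ y) ≫ ((Functor.const J).obj s.pt).map (homOfLE hle)) ⟨y, hmem y⟩ :=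
          congrArg (fun φ => φ.hom ⟨y, hmem y⟩) (s.ι.naturality (homOfLE hle))
      _ = s.ι.app (σ y) ⟨y, hmem y⟩ := rfl
  let d : ∀ s : Limits.Cocone F, Y → s.pt := fun s y => s.ι.app (σ y) ⟨y, hmem y⟩
  have dadd : ∀ (s : Limits.Cocone F) (y z : Y), d s (y + z) = d s y + d s z := by
    intro s y z
    let N : J := ⟨(σ y).1 ⊔ (σ z).1, ((σ y).2).sup ((σ z).2)⟩
    have hy : y ∈ N.1 := Submodule.mem_sup_left (hmem y)
    have hz : z ∈ N.1 := Submodule.mem_sup_right (hmem z)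
    have hyz : y + z ∈ N.1 := N.1.add_mem hy hz
    have e : (⟨y + z, hyz⟩ : N.1) = ⟨y, hy⟩ + ⟨z, hz⟩ := rfl
    calc d s (y + z) = s.ι.app N ⟨y + z, hyz⟩ := (key s N (y + z) hyz).symm
      _ = s.ι.app N ⟨y, hy⟩ + s.ι.app N ⟨z, hz⟩ := by rw [e, map_add]
      _ = d s y + d s z := by rw [key s N y hy, key s N z hz]
  have dsmul : ∀ (s : Limits.Cocone F) (a : A) (y : Y), d s (a • y) = a • d s y := by
    intro s a y
    have hay : a • y ∈ (σ y).1 := (σ y).1.smul_mem a (hmem y)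
    have e : (⟨a • y, hay⟩ : (σ y).1) = a • ⟨y, hmem y⟩ := rfl
    calc d s (a • y) = s.ι.app (σ y) ⟨a • y, hay⟩ := (key s (σ y) (a • y) hay).symm
      _ = a • (s.ι.app (σ y) ⟨y, hmem y⟩ : s.pt) := by rw [e, map_smul]
      _ = a • d s y := rfl
  refine
    { desc := fun s => ModuleCat.ofHom
        { toFun := d s
          map_add' := dadd s
          map_smul' := fun a y => dsmul s a y }
      fac := fun s N => ?_
      uniq := fun s m hm => ?_ }
  · ext x
    exact (key s N x.1 x.2).symm
  · ext y
    exact congrArg (fun φ => φ.hom ⟨y, hmem y⟩) (hm (σ y))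

theorem filtered_colimit_iff_fg_submodules
    {R : Type u} [CommRing R] [IsArtinianRing R]
    {A : Type u} [Ring A] [Algebra R A] [Module.Finite R A]
    (C : Set (ModuleCat.{u} A)) (hC : IsSubmoduleClosedSubcat A C)
    (Y : ModuleCat.{u} A) :
    Nonempty (FilteredColimitPresentation A C Y) ↔
      ∀ N : Submodule A Y, Module.Finite A N → ModuleCat.of A N ∈ C := by
  constructor
  · rintro ⟨P⟩ N hN
    haveI : IsNoetherianRing R := isNoetherianRing_of_isArtinianRing' R
    haveI hRA : IsNoetherian R A := inferInstance
    haveI : IsNoetherianRing A := isNoetherian_of_tower R hRA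
    exact fwd C hC Y P N hN
  · intro h
    exact ⟨backPres C Y h⟩
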